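/- Assuming Schanuel's conjecture, the unique real root R of x + e^x = 0 does not lie in the field E of EL numbers. -/

import Mathlib

open Complex

/-- A subfield `F` of `ℂ` is closed under `exp` and `log` (principal branch:
`Complex.log` has imaginary part in `(-π, π]`). -/
def ELClosed (F : Subfield ℂ) : Prop :=
  (∀ x ∈ F, Complex.exp x ∈ F) ∧ (∀ x ∈ F, x ≠ 0 → Complex.log x ∈ F)

/-- The field `𝔼` of EL numbers: the intersection of all subfields of `ℂ`
closed under `exp` and `log`. -/
noncomputable def EL : Subfield ℂ := sInf {F | ELClosed F}

/-- Schanuel's conjecture: if `α₁, …, α_n` are `ℚ`-linearly independent complex numbers,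
then the field `ℚ(α₁, e^{α₁}, …, α_n, e^{α_n})` has transcendence degree at least `n`
over `ℚ`, i.e. it contains `n` algebraically independent elements. -/
def SchanuelConjecture : Prop :=
  ∀ (n : ℕ) (α : Fin n → ℂ), LinearIndependent ℚ α →
    ∃ f : Fin n → ℂ,
      (∀ i, f i ∈ Subfield.closure
        (Set.range α ∪ Set.range fun i => Complex.exp (α i))) ∧
      AlgebraicIndependent ℚ f


open Polynomial

set_option maxHeartbeats 1000000
set_option synthInstance.maxHeartbeats 1000000

noncomputable section AuxiliaryLemmas

/-- Construct `IsAlgebraic` over a subfield from a ℂ-polynomial with coefficients in it. -/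
lemma isAlg_of_poly {K : Subfield ℂ} {z : ℂ} (p : ℂ[X]) (hp : p ≠ 0)
    (hc : ∀ n, p.coeff n ∈ K) (hz : p.eval z = 0) : IsAlgebraic ↥K z := by
  have hcs : ↑p.coeffs ⊆ (K.toSubring : Set ℂ) := by
    intro c hcmem
    simp only [Finset.coe_image, Set.mem_image, Polynomial.coeffs, Finset.mem_coe,
      Finset.mem_image] at hcmem
    obtain ⟨n, _, rfl⟩ := hcmem
    exact hc n
  refine ⟨p.toSubring K.toSubring hcs, ?_, ?_⟩
  · intro h
    apply hp
    have := Polynomial.map_toSubring p K.toSubring hcs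
    rw [h] at this
    simpa using this.symm
  · have hmap : Polynomial.map (algebraMap ↥K ℂ) (p.toSubring K.toSubring hcs) = p :=
      Polynomial.map_toSubring p K.toSubring hcs
    rw [Polynomial.aeval_def, Polynomial.eval₂_eq_eval_map, hmap, hz]

lemma poly_of_isAlg {K : Subfield ℂ} {z : ℂ} (h : IsAlgebraic ↥K z) :
    ∃ p : ℂ[X], p ≠ 0 ∧ (∀ n, p.coeff n ∈ K) ∧ p.eval z = 0 := by
  obtain ⟨q, hq, hqz⟩ := h
  refine ⟨q.map (algebraMap ↥K ℂ), ?_, ?_, ?_⟩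
  · simpa [Polynomial.map_eq_zero_iff (algebraMap ↥K ℂ).injective] using hq
  · intro n; rw [Polynomial.coeff_map]; exact (q.coeff n).2
  · rw [← Polynomial.eval₂_eq_eval_map, ← Polynomial.aeval_def, hqz]

/-- monotonicity -/
lemma isAlg_mono {K L : Subfield ℂ} (h : K ≤ L) {z : ℂ} (hz : IsAlgebraic ↥K z) :
    IsAlgebraic ↥L z := by
  obtain ⟨p, hp, hc, he⟩ := poly_of_isAlg hz
  exact isAlg_of_poly p hp (fun n => h (hc n)) he

lemma isAlg_of_mem {K : Subfield ℂ} {z : ℂ} (h : z ∈ K) : IsAlgebraic ↥K z := by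
  exact isAlgebraic_algebraMap (⟨z, h⟩ : K)

/-- like isAlg_of_poly but for an intermediate field over a subfield -/
lemma isAlg_of_poly' {F : Subfield ℂ} (K : IntermediateField ↥F ℂ) {z : ℂ} (p : ℂ[X]) (hp : p ≠ 0)
    (hc : ∀ n, p.coeff n ∈ K) (hz : p.eval z = 0) : IsAlgebraic ↥K z := by
  have hcs : ↑p.coeffs ⊆ (K.toSubfield.toSubring : Set ℂ) := by
    intro c hcmem
    simp only [Finset.coe_image, Set.mem_image, Polynomial.coeffs, Finset.mem_coe,
      Finset.mem_image] at hcmem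
    obtain ⟨n, _, rfl⟩ := hcmem
    exact hc n
  refine ⟨p.toSubring K.toSubfield.toSubring hcs, ?_, ?_⟩
  · intro h
    apply hp
    have := Polynomial.map_toSubring p K.toSubfield.toSubring hcs
    rw [h] at this
    simpa using this.symm
  · have hmap : Polynomial.map (algebraMap ↥K ℂ) (p.toSubring K.toSubfield.toSubring hcs) = p :=
      Polynomial.map_toSubring p K.toSubfield.toSubring hcs
    rw [Polynomial.aeval_def, Polynomial.eval₂_eq_eval_map, hmap, hz]

/-- MASTER transitivity: if every element of `S` is algebraic over `F` and `z` is
algebraic over the subfield generated by `F ∪ S`, then `z` is algebraic over `F`. -/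
lemma isAlg_trans {F : Subfield ℂ} {S : Set ℂ} (hS : ∀ x ∈ S, IsAlgebraic ↥F x)
    {z : ℂ} (hz : IsAlgebraic ↥(Subfield.closure (↑F ∪ S)) z) : IsAlgebraic ↥F z := by
  set K : IntermediateField ↥F ℂ := IntermediateField.adjoin ↥F S with hK
  have hle : Subfield.closure (↑F ∪ S) ≤ K.toSubfield := by
    apply Subfield.closure_le.2
    rintro x (hx | hx)
    · exact K.algebraMap_mem ⟨x, hx⟩
    · exact IntermediateField.subset_adjoin ↥F S hx
  -- z is algebraic over K
  obtain ⟨p, hp, hc, he⟩ := poly_of_isAlg hz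
  have hzK : IsAlgebraic ↥K z := isAlg_of_poly' K p hp (fun n => hle (hc n)) he
  have : Algebra.IsAlgebraic ↥F ↥K :=
    IntermediateField.isAlgebraic_adjoin (fun x hx => (hS x hx).isIntegral)
  have : Algebra.IsIntegral ↥F ↥K := Algebra.IsAlgebraic.isIntegral
  exact (isIntegral_trans z hzK.isIntegral).isAlgebraic

/-- bridge for subalgebras (over any base field k inside ℂ) -/
lemma isAlg_of_polyA {k : Type*} [Field k] [Algebra k ℂ] {T : Subalgebra k ℂ} {z : ℂ}
    (p : ℂ[X]) (hp : p ≠ 0) (hc : ∀ n, p.coeff n ∈ T) (hz : p.eval z = 0) :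
    IsAlgebraic ↥T z := by
  have hcs : ↑p.coeffs ⊆ (T.toSubring : Set ℂ) := by
    intro c hcmem
    simp only [Finset.coe_image, Set.mem_image, Polynomial.coeffs, Finset.mem_coe,
      Finset.mem_image] at hcmem
    obtain ⟨n, _, rfl⟩ := hcmem
    exact hc n
  refine ⟨p.toSubring T.toSubring hcs, ?_, ?_⟩
  · intro h
    apply hp
    have := Polynomial.map_toSubring p T.toSubring hcs
    rw [h] at this
    simpa using this.symm
  · have hmap : Polynomial.map (algebraMap ↥T ℂ) (p.toSubring T.toSubring hcs) = p :=
      Polynomial.map_toSubring p T.toSubring hcs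
    rw [Polynomial.aeval_def, Polynomial.eval₂_eq_eval_map, hmap, hz]

lemma poly_of_isAlgA {k : Type*} [Field k] [Algebra k ℂ] {T : Subalgebra k ℂ} {z : ℂ}
    (h : IsAlgebraic ↥T z) :
    ∃ p : ℂ[X], p ≠ 0 ∧ (∀ n, p.coeff n ∈ T) ∧ p.eval z = 0 := by
  obtain ⟨q, hq, hqz⟩ := h
  refine ⟨q.map (algebraMap ↥T ℂ), ?_, ?_, ?_⟩
  · intro h0
    apply hq
    have := Polynomial.map_injective (algebraMap ↥T ℂ) Subtype.val_injective
    apply this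
    simpa using h0
  · intro n; rw [Polynomial.coeff_map]; exact (q.coeff n).2
  · rw [← Polynomial.eval₂_eq_eval_map, ← Polynomial.aeval_def, hqz]

/-- Clearing denominators: algebraic over the subfield generated by `S` implies a
ℂ-polynomial witness with coefficients in the subring generated by `S`. -/
lemma clear_denoms {S : Set ℂ} {z : ℂ} (hz : IsAlgebraic ↥(Subfield.closure S) z) :
    ∃ p : ℂ[X], p ≠ 0 ∧ (∀ n, p.coeff n ∈ Subring.closure S) ∧ p.eval z = 0 := by
  obtain ⟨p, hp, hc, he⟩ := poly_of_isAlg hz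
  -- for each n pick numerator/denominator
  have key : ∀ n : ℕ, ∃ a b : ℂ, a ∈ Subring.closure S ∧ b ∈ Subring.closure S ∧
      b ≠ 0 ∧ p.coeff n = a / b := by
    intro n
    by_cases h0 : p.coeff n = 0
    · exact ⟨0, 1, Subring.zero_mem _, Subring.one_mem _, one_ne_zero, by simp [h0]⟩
    · obtain ⟨a, ha, b, hb, hab⟩ := Subfield.mem_closure_iff.1 (hc n)
      refine ⟨a, b, ha, hb, ?_, hab.symm⟩
      intro hb0; rw [hb0] at hab; simp at hab; exact h0 hab.symm
  choose a b ha hb hb0 hab using key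
  set d : ℂ := ∏ n ∈ p.support, b n with hd
  have hd0 : d ≠ 0 := Finset.prod_ne_zero_iff.2 fun n _ => hb0 n
  refine ⟨C d * p, mul_ne_zero (by simpa using hd0) hp, ?_, by simp [he]⟩
  intro n
  rw [coeff_C_mul]
  by_cases hn : n ∈ p.support
  · have : d = b n * ∏ m ∈ p.support.erase n, b m := (Finset.mul_prod_erase _ _ hn).symm
    have : d * p.coeff n = a n * ∏ m ∈ p.support.erase n, b m := by
      rw [this, hab n]
      rw [mul_comm (b n) _, mul_assoc, mul_div_cancel₀ _ (hb0 n), mul_comm]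
    rw [this]
    exact Subring.mul_mem _ (ha n) (Subring.prod_mem _ fun m _ => hb m)
  · rw [Polynomial.notMem_support_iff.1 hn, mul_zero]
    exact Subring.zero_mem _

lemma clos_clos (A B : Set ℂ) :
    Subfield.closure (↑(Subfield.closure A) ∪ B) = Subfield.closure (A ∪ B) := by
  refine le_antisymm (Subfield.closure_le.2 ?_) (Subfield.closure_mono ?_)
  · rintro x (hx | hx)
    · exact Subfield.closure_mono Set.subset_union_left hx
    · exact Subfield.subset_closure (Or.inr hx)
  · exact Set.union_subset_union_left B Subfield.subset_closure

lemma isAlg_combo {F : Subfield ℂ} {S : Set ℂ} (hS : ∀ x ∈ S, IsAlgebraic ↥F x)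
    {z : ℂ} (hz : z ∈ Subfield.closure (↑F ∪ S)) : IsAlgebraic ↥F z :=
  isAlg_trans hS (isAlg_of_mem hz)

lemma pow_mem_isAlg {K : Subfield ℂ} {z : ℂ} {N : ℕ} (hN : N ≠ 0) (h : z ^ N ∈ K) :
    IsAlgebraic ↥K z := by
  refine isAlg_of_poly (X ^ N - C (z ^ N)) (X_pow_sub_C_ne_zero (Nat.pos_of_ne_zero hN) _) ?_
    (by simp)
  intro n
  rw [coeff_sub, coeff_X_pow, coeff_C]
  refine Subfield.sub_mem _ ?_ ?_ <;> split <;>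
    simp [Subfield.one_mem, Subfield.zero_mem, h]

lemma isAlg_zpow {K : Subfield ℂ} {z : ℂ} (hz : IsAlgebraic ↥K z) (m : ℤ) :
    IsAlgebraic ↥K (z ^ m) := by
  have hmem : z ∈ Subfield.closure (↑K ∪ ({z} : Set ℂ)) :=
    Subfield.subset_closure (Or.inr rfl)
  exact isAlg_combo (S := ({z} : Set ℂ)) (by rintro x rfl; exact hz)
    (Subfield.zpow_mem _ hmem m)

lemma isAlg_inv {K : Subfield ℂ} {z : ℂ} (hz : IsAlgebraic ↥K z) : IsAlgebraic ↥K z⁻¹ := by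
  have hmem : z ∈ Subfield.closure (↑K ∪ ({z} : Set ℂ)) :=
    Subfield.subset_closure (Or.inr rfl)
  exact isAlg_combo (S := ({z} : Set ℂ)) (by rintro x rfl; exact hz)
    (Subfield.inv_mem _ hmem)

lemma isAlg_of_zpow {K : Subfield ℂ} {z : ℂ} {m : ℤ} (hm : m ≠ 0)
    (h : IsAlgebraic ↥K (z ^ m)) : IsAlgebraic ↥K z := by
  rcases lt_or_gt_of_ne hm with hneg | hpos
  · have h2 : IsAlgebraic ↥K (z ^ (-m).toNat) := by
      have : z ^ (-m).toNat = (z ^ m)⁻¹ := by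
        rw [← zpow_natCast, Int.toNat_of_nonneg (by omega), zpow_neg]
      rw [this]; exact isAlg_inv h
    exact h2.of_pow (by omega)
  · have h2 : IsAlgebraic ↥K (z ^ m.toNat) := by
      rwa [← zpow_natCast, Int.toNat_of_nonneg (by omega)]
    exact h2.of_pow (by omega)

lemma mem_adjoin_to_closure {F : Subfield ℂ} {s : Set ℂ} {x : ℂ}
    (hx : x ∈ Algebra.adjoin ↥F s) : x ∈ Subfield.closure (↑F ∪ s) := by
  induction hx using Algebra.adjoin_induction with
  | mem y hy => exact Subfield.subset_closure (Or.inr hy)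
  | algebraMap r => exact Subfield.subset_closure (Or.inl r.2)
  | add _ _ _ _ h1 h2 => exact Subfield.add_mem _ h1 h2
  | mul _ _ _ _ h1 h2 => exact Subfield.mul_mem _ h1 h2

lemma subring_closure_le_adjoin {F : Subfield ℂ} {s : Set ℂ} {x : ℂ}
    (hx : x ∈ Subring.closure (↑F ∪ s)) : x ∈ Algebra.adjoin ↥F s := by
  refine Subring.closure_le (t := (Algebra.adjoin ↥F s).toSubring).2 ?_ hx
  rintro y (hy | hy)
  · exact (Algebra.adjoin ↥F s).algebraMap_mem ⟨y, hy⟩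
  · exact Algebra.subset_adjoin hy

lemma subring_closure_le_adjoinQ {s : Set ℂ} {x : ℂ}
    (hx : x ∈ Subring.closure s) : x ∈ Algebra.adjoin ℚ s :=
  Subring.closure_le (t := (Algebra.adjoin ℚ s).toSubring).2 Algebra.subset_adjoin hx

/-- The exchange lemma. -/
lemma exchange {F : Subfield ℂ} {a b : ℂ} (ha : Transcendental ↥F a)
    (hab : IsAlgebraic ↥(Subfield.closure (↑F ∪ {b})) a) :
    IsAlgebraic ↥(Subfield.closure (↑F ∪ {a})) b := by
  by_contra hb
  -- single-element family `a` is algebraically independent over F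
  have hxa : AlgebraicIndependent ↥F (fun _ : Unit => a) :=
    algebraicIndependent_unique_type_iff.2 ha
  -- b is transcendental over F[a]
  have hb' : Transcendental ↥(Algebra.adjoin ↥F (Set.range fun _ : Unit => a)) b := by
    intro halg
    apply hb
    obtain ⟨p, hp, hc, he⟩ := poly_of_isAlgA halg
    refine isAlg_of_poly p hp (fun n => ?_) he
    have := mem_adjoin_to_closure (hc n)
    simpa [Set.range_const] using this
  -- so the pair (b, a) is algebraically independent over F
  have hpair : AlgebraicIndependent ↥F (fun o : Option Unit => o.elim b fun _ => a) :=
    (hxa.option_iff_transcendental b).2 hb'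
  -- flip to the pair (a, b)
  have hpair' : AlgebraicIndependent ↥F (fun o : Option Unit => o.elim a fun _ => b) := by
    have hcomp : (fun o : Option Unit => o.elim b fun _ => a) ∘
        ⇑(Equiv.swap (none : Option Unit) (some ())) =
        (fun o : Option Unit => o.elim a fun _ => b) := by
      funext o
      match o with
      | none => simp
      | some () => simp
    exact (algebraicIndependent_equiv' _ hcomp).2 hpair
  -- hence a is transcendental over F[b]
  have hxb : AlgebraicIndependent ↥F (fun _ : Unit => b) := by
    have := hpair'.comp (fun u : Unit => some u) (fun u v _ => rfl)
    exact this
  have hta : Transcendental ↥(Algebra.adjoin ↥F (Set.range fun _ : Unit => b)) a :=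
    (hxb.option_iff_transcendental a).1 hpair'
  -- but a is algebraic over the subfield generated by F ∪ {b}: clear denominators
  apply hta
  have : Subfield.closure (↑F ∪ {b}) = Subfield.closure (↑F ∪ {b}) := rfl
  obtain ⟨p, hp, hc, he⟩ := clear_denoms (S := ↑F ∪ {b}) hab
  refine isAlg_of_polyA p hp (fun n => ?_) he
  have := subring_closure_le_adjoin (hc n)
  simpa [Set.range_const] using this

/-- Entry conversion: algebraic independence over ℚ gives transcendence of each member
over the subfield generated by the others. -/
lemma entry_transcendental {K : ℕ} {f : Fin (K + 1) → ℂ} (hf : AlgebraicIndependent ℚ f)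
    (i : Fin (K + 1)) :
    Transcendental ↥(Subfield.closure (f '' {j | j ≠ i})) (f i) := by
  intro halg
  set v : {j : Fin (K + 1) // j ≠ i} → ℂ := f ∘ Subtype.val with hv_def
  have hv : AlgebraicIndependent ℚ v := hf.comp _ Subtype.val_injective
  let e : Option {j : Fin (K + 1) // j ≠ i} ≃ Fin (K + 1) :=
    { toFun := fun o => o.elim i Subtype.val
      invFun := fun j => if h : j = i then none else some ⟨j, h⟩
      left_inv := by
        rintro (_ | ⟨j, hj⟩)
        · simp
        · simp [hj]
      right_inv := by
        intro j
        by_cases h : j = i <;> simp [h] }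
  have hcomp : f ∘ ⇑e = fun o => o.elim (f i) v := by
    funext o
    cases o <;> rfl
  have hopt := (algebraicIndependent_equiv' e hcomp).2 hf
  have htr := (hv.option_iff_transcendental (f i)).1 hopt
  apply htr
  have hrange : Set.range v = f '' {j | j ≠ i} := by
    rw [hv_def, Set.range_comp, Subtype.range_coe_subtype]
  obtain ⟨p, hp, hc, he⟩ := clear_denoms halg
  refine isAlg_of_polyA p hp (fun n => ?_) he
  rw [hrange]
  exact subring_closure_le_adjoinQ (hc n)

/-- Main finite transcendence-degree bound. -/
lemma lemA : ∀ (k : ℕ) (F : Subfield ℂ) (t : Finset ℂ), t.card ≤ k →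
    ∀ y : Fin (k + 1) → ℂ,
    (∀ i, Transcendental ↥(Subfield.closure ((F : Set ℂ) ∪ y '' {j | j ≠ i})) (y i)) →
    (∀ i, IsAlgebraic ↥(Subfield.closure ((F : Set ℂ) ∪ (t : Set ℂ))) (y i)) → False := by
  intro k
  induction k with
  | zero =>
    intro F t ht y hy halg
    have ht0 : t = ∅ := Finset.card_eq_zero.1 (Nat.le_zero.1 ht)
    apply hy 0
    refine isAlg_mono (Subfield.closure_mono ?_) (halg 0)
    rw [ht0]
    simp
  | succ k IH =>
    intro F t ht y hy halg
    classical
    -- the collection of subsets of t over which y 0 is algebraic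
    set P : Finset ℂ → Prop :=
      fun s => IsAlgebraic ↥(Subfield.closure ((F : Set ℂ) ∪ (s : Set ℂ))) (y 0) with hP_def
    have hne : (t.powerset.filter P).Nonempty :=
      ⟨t, by simp [Finset.mem_filter, Finset.mem_powerset, hP_def, halg 0]⟩
    obtain ⟨s, hsmem, hmin⟩ := Finset.exists_min_image (t.powerset.filter P) Finset.card hne
    rw [Finset.mem_filter, Finset.mem_powerset] at hsmem
    obtain ⟨hsub, hs0⟩ := hsmem
    -- s is nonempty
    have hsne : s.Nonempty := by
      rcases Finset.eq_empty_or_nonempty s with rfl | h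
      · exfalso
        apply hy 0
        refine isAlg_mono (Subfield.closure_mono ?_) hs0
        simp
      · exact h
    obtain ⟨b, hb⟩ := hsne
    set F1 : Subfield ℂ := Subfield.closure ((F : Set ℂ) ∪ (s.erase b : Set ℂ)) with hF1
    have htr1 : Transcendental ↥F1 (y 0) := by
      intro halg1
      have hmem : s.erase b ∈ t.powerset.filter P := by
        rw [Finset.mem_filter, Finset.mem_powerset]
        exact ⟨(Finset.erase_subset _ _).trans hsub, halg1⟩
      have hcard := hmin _ hmem
      rw [Finset.card_erase_of_mem hb] at hcard
      have := Finset.card_pos.2 ⟨b, hb⟩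
      omega
    have hab : IsAlgebraic ↥(Subfield.closure (↑F1 ∪ {b})) (y 0) := by
      refine isAlg_mono ?_ hs0
      rw [hF1, clos_clos]
      refine Subfield.closure_mono ?_
      rintro x (hx | hx)
      · exact Or.inl (Or.inl hx)
      · rcases eq_or_ne x b with rfl | hxb
        · exact Or.inr rfl
        · exact Or.inl (Or.inr (Finset.mem_coe.2 (Finset.mem_erase.2 ⟨hxb, hx⟩)))
    have hexb := exchange htr1 hab
    set F' : Subfield ℂ := Subfield.closure ((F : Set ℂ) ∪ {y 0}) with hF'
    set t' : Finset ℂ := t.erase b with ht'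
    have hbG : IsAlgebraic ↥(Subfield.closure ((F' : Set ℂ) ∪ (t' : Set ℂ))) b := by
      refine isAlg_mono ?_ hexb
      rw [hF1, clos_clos, hF', clos_clos]
      refine Subfield.closure_mono ?_
      rintro x ((hx | hx) | hx)
      · exact Or.inl (Or.inl hx)
      · have hxs := Finset.mem_erase.1 hx
        exact Or.inr (Finset.mem_coe.2 (Finset.mem_erase.2 ⟨hxs.1, hsub hxs.2⟩))
      · exact Or.inl (Or.inr hx)
    have hyG : ∀ i, IsAlgebraic ↥(Subfield.closure ((F' : Set ℂ) ∪ (t' : Set ℂ))) (y i) := by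
      intro i
      have h1 : IsAlgebraic
          ↥(Subfield.closure (↑(Subfield.closure ((F' : Set ℂ) ∪ (t' : Set ℂ))) ∪ {b})) (y i) := by
        refine isAlg_mono (Subfield.closure_le.2 ?_) (halg i)
        rintro x (hx | hx)
        · exact Subfield.subset_closure (Or.inl (Subfield.subset_closure
            (Or.inl (Subfield.subset_closure (Or.inl hx)))))
        · rcases eq_or_ne x b with rfl | hxb
          · exact Subfield.subset_closure (Or.inr rfl)
          · exact Subfield.subset_closure (Or.inl (Subfield.subset_closure
              (Or.inr (Finset.mem_coe.2 (Finset.mem_erase.2 ⟨hxb, hx⟩)))))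
      exact isAlg_trans (S := {b}) (by rintro x rfl; exact hbG) h1
    refine IH F' t' ?_ (y ∘ Fin.succ) ?_ ?_
    · rw [ht', Finset.card_erase_of_mem (hsub hb)]
      have := Finset.card_pos.2 ⟨b, hsub hb⟩
      omega
    · intro i
      have hfield : Subfield.closure ((F' : Set ℂ) ∪ (y ∘ Fin.succ) '' {j | j ≠ i}) =
          Subfield.closure ((F : Set ℂ) ∪ y '' {j | j ≠ i.succ}) := by
        rw [hF', clos_clos, Set.union_assoc]
        congr 2
        ext z
        constructor
        · rintro (rfl | ⟨j, hj, rfl⟩)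
          · exact ⟨0, fun h => (Fin.succ_ne_zero i) h.symm, rfl⟩
          · exact ⟨j.succ, fun h => hj (Fin.succ_injective _ h), rfl⟩
        · rintro ⟨j, hj, rfl⟩
          induction j using Fin.cases with
          | zero => exact Or.inl rfl
          | succ j' => exact Or.inr ⟨j', fun h => hj (by rw [h]), rfl⟩
      rw [hfield]
      exact hy i.succ
    · intro i
      exact hyG i.succ

/-- the field generated by the first `k` entries of a tower and their exponentials -/
def PF {n : ℕ} (α : Fin n → ℂ) (k : ℕ) : Subfield ℂ :=
  Subfield.closure ((α '' {i | (i : ℕ) < k}) ∪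
    ((fun i => Complex.exp (α i)) '' {i | (i : ℕ) < k}))

def SF {n : ℕ} (α : Fin n → ℂ) : Subfield ℂ := PF α n

/-- a reduced tower -/
def TowerN (n : ℕ) (α : Fin n → ℂ) : Prop :=
  LinearIndependent ℚ α ∧
    ∀ i : Fin n, IsAlgebraic ↥(PF α i) (α i) ∨ IsAlgebraic ↥(PF α i) (Complex.exp (α i))

lemma PF_mono {n : ℕ} (α : Fin n → ℂ) {k k' : ℕ} (h : k ≤ k') : PF α k ≤ PF α k' := by
  apply Subfield.closure_mono
  apply Set.union_subset_union <;> exact Set.image_mono fun i hi => lt_of_lt_of_le hi h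

lemma mem_PF_self {n : ℕ} (α : Fin n → ℂ) {k : ℕ} (i : Fin n) (h : (i : ℕ) < k) :
    α i ∈ PF α k ∧ Complex.exp (α i) ∈ PF α k :=
  ⟨Subfield.subset_closure (Or.inl ⟨i, h, rfl⟩),
   Subfield.subset_closure (Or.inr ⟨i, h, rfl⟩)⟩

lemma castSucc_image {n : ℕ} (β : Fin (n + 1) → ℂ) {k : ℕ} (hk : k ≤ n) :
    β '' {i : Fin (n + 1) | (i : ℕ) < k} =
      (β ∘ Fin.castSucc) '' {i : Fin n | (i : ℕ) < k} := by
  ext z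
  constructor
  · rintro ⟨i, hi, rfl⟩
    exact ⟨⟨(i : ℕ), lt_of_lt_of_le hi hk⟩, hi, by simp [Fin.castSucc, Fin.ext_iff]⟩
  · rintro ⟨i, hi, rfl⟩
    exact ⟨i.castSucc, hi, rfl⟩

lemma PF_castSucc {n : ℕ} (β : Fin (n + 1) → ℂ) {k : ℕ} (hk : k ≤ n) :
    PF β k = PF (β ∘ Fin.castSucc) k := by
  unfold PF
  rw [castSucc_image β hk, castSucc_image (fun i => Complex.exp (β i)) hk]
  rfl

lemma PF_snoc {n : ℕ} (α : Fin n → ℂ) (a : ℂ) {k : ℕ} (hk : k ≤ n) :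
    PF (Fin.snoc α a) k = PF α k := by
  rw [PF_castSucc _ hk]
  congr 1
  funext i
  simp [Fin.snoc_castSucc]

lemma span_mem_subfield {K : Subfield ℂ} {S : Set ℂ} (hS : S ⊆ ↑K) {x : ℂ}
    (hx : x ∈ Submodule.span ℚ S) : x ∈ K := by
  induction hx using Submodule.span_induction with
  | mem y hy => exact hS hy
  | zero => exact K.zero_mem
  | add _ _ _ _ h1 h2 => exact K.add_mem h1 h2
  | smul q y _ hy =>
    rw [Rat.smul_def]
    exact K.mul_mem (SubfieldClass.ratCast_mem K q) hy

/-- clearing denominators in a ℚ-linear combination -/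
lemma span_int_relation {n : ℕ} {α : Fin n → ℂ} {x : ℂ}
    (hx : x ∈ Submodule.span ℚ (Set.range α)) :
    ∃ (N : ℕ) (c : Fin n → ℚ) (m : Fin n → ℤ), 0 < N ∧ x = ∑ i, c i • α i ∧
      (∀ i, (m i : ℚ) = N * c i) ∧ (∀ i, m i = 0 ↔ c i = 0) := by
  obtain ⟨c, hc⟩ := Submodule.mem_span_range_iff_exists_fun ℚ |>.1 hx
  set N : ℕ := ∏ i, (c i).den with hN
  have hNpos : 0 < N := Finset.prod_pos fun i _ => (c i).pos
  have hdvd : ∀ i : Fin n, ∃ t : ℤ, (N : ℤ) = (c i).den * t := by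
    intro i
    obtain ⟨t, ht⟩ := Finset.dvd_prod_of_mem (fun i => (c i).den) (Finset.mem_univ i)
    exact ⟨t, by exact_mod_cast ht⟩
  choose t ht using hdvd
  refine ⟨N, c, fun i => (c i).num * t i, hNpos, hc.symm, ?_, ?_⟩
  · intro i
    have hden : ((c i).den : ℚ) ≠ 0 := by exact_mod_cast (c i).den_nz
    have h1 : (N : ℚ) = ((c i).den : ℚ) * (t i : ℚ) := by exact_mod_cast ht i
    have h2 := Rat.num_div_den (c i)
    have h3 : ((c i).num : ℚ) = c i * ((c i).den : ℚ) := (div_eq_iff hden).1 h2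
    push_cast
    rw [h1, h3]
    ring
  · intro i
    have hti : t i ≠ 0 := by
      intro h0
      have hti' := ht i
      rw [h0, mul_zero] at hti'
      omega
    constructor
    · intro h
      simp only at h
      rcases mul_eq_zero.1 h with h | h
      · exact Rat.num_eq_zero.1 h
      · exact absurd h hti
    · intro h
      simp only [Rat.num_eq_zero.2 h, zero_mul]

lemma exp_pow_relation {n : ℕ} (α : Fin n → ℂ) (x : ℂ) (c : Fin n → ℚ) (N : ℕ)
    (m : Fin n → ℤ) (hx : x = ∑ i, c i • α i) (hm : ∀ i, (m i : ℚ) = N * c i) :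
    Complex.exp x ^ N = ∏ i, Complex.exp (α i) ^ m i := by
  have h1 : ((N : ℂ)) * x = ∑ i, (m i : ℂ) * α i := by
    rw [hx, Finset.mul_sum]
    refine Finset.sum_congr rfl fun i _ => ?_
    have : ((m i : ℚ) : ℂ) = ((N : ℚ) : ℂ) * ((c i : ℚ) : ℂ) := by
      rw [hm i]; push_cast; ring
    rw [Rat.smul_def]
    push_cast at this ⊢
    rw [this]; ring
  calc Complex.exp x ^ N = Complex.exp ((N : ℂ) * x) := by
        rw [← Complex.exp_nat_mul]
    _ = ∏ i, Complex.exp ((m i : ℂ) * α i) := by rw [h1, Complex.exp_sum]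
    _ = ∏ i, Complex.exp (α i) ^ m i := by
        refine Finset.prod_congr rfl fun i _ => ?_
        rw [Complex.exp_int_mul]

lemma range_subset_SF {n : ℕ} (α : Fin n → ℂ) : Set.range α ⊆ ↑(SF α) := by
  rintro x ⟨i, rfl⟩
  exact (mem_PF_self α i i.isLt).1

lemma span_mem_SF {n : ℕ} {α : Fin n → ℂ} {a : ℂ}
    (ha : a ∈ Submodule.span ℚ (Set.range α)) : a ∈ SF α :=
  span_mem_subfield (range_subset_SF α) ha

lemma exp_span_alg {n : ℕ} {α : Fin n → ℂ} {a : ℂ}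
    (ha : a ∈ Submodule.span ℚ (Set.range α)) : IsAlgebraic ↥(SF α) (Complex.exp a) := by
  obtain ⟨N, c, m, hNpos, hsum, hm, -⟩ := span_int_relation ha
  refine pow_mem_isAlg hNpos.ne' ?_
  rw [exp_pow_relation α a c N m hsum hm]
  exact Subfield.prod_mem _ fun i _ =>
    Subfield.zpow_mem _ ((mem_PF_self α i i.isLt).2) (m i)

/-- lifting algebraicity through a tower field whose generators are algebraic over G -/
lemma liftAlg {G : Subfield ℂ} {n : ℕ} {β : Fin n → ℂ} {k : ℕ}
    (hgen : ∀ i : Fin n, (i : ℕ) < k → IsAlgebraic ↥G (β i) ∧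
      IsAlgebraic ↥G (Complex.exp (β i)))
    {z : ℂ} (hz : IsAlgebraic ↥(PF β k) z) : IsAlgebraic ↥G z := by
  set S : Set ℂ := (β '' {i | (i : ℕ) < k}) ∪
    ((fun i => Complex.exp (β i)) '' {i | (i : ℕ) < k}) with hS
  refine isAlg_trans (S := S) ?_ (isAlg_mono ?_ hz)
  · rintro x (⟨i, hi, rfl⟩ | ⟨i, hi, rfl⟩)
    · exact (hgen i hi).1
    · exact (hgen i hi).2
  · exact Subfield.closure_mono Set.subset_union_right

/-- extending a tower by one element -/
lemma mergeOne {n : ℕ} {α : Fin n → ℂ} (hT : TowerN n α) (a : ℂ)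
    (ha : IsAlgebraic ↥(SF α) a ∨ IsAlgebraic ↥(SF α) (Complex.exp a)) :
    ∃ (p : ℕ) (γ : Fin p → ℂ), TowerN p γ ∧ SF α ≤ SF γ ∧
      IsAlgebraic ↥(SF γ) a ∧ IsAlgebraic ↥(SF γ) (Complex.exp a) := by
  by_cases hspan : a ∈ Submodule.span ℚ (Set.range α)
  · exact ⟨n, α, hT, le_rfl, isAlg_of_mem (span_mem_SF hspan), exp_span_alg hspan⟩
  · refine ⟨n + 1, Fin.snoc α a, ⟨linearIndependent_fin_snoc.2 ⟨hT.1, hspan⟩, ?_⟩, ?_, ?_, ?_⟩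
    · intro i
      induction i using Fin.lastCases with
      | last =>
        rw [show ((Fin.last n : Fin (n + 1)) : ℕ) = n from rfl, PF_snoc α a le_rfl,
          Fin.snoc_last]
        exact ha
      | cast i =>
        rw [show ((i.castSucc : Fin (n + 1)) : ℕ) = (i : ℕ) from rfl,
          PF_snoc α a (le_of_lt i.isLt), Fin.snoc_castSucc]
        exact hT.2 i
    · rw [show SF α = PF (Fin.snoc α a) n from (PF_snoc α a le_rfl).symm]
      exact PF_mono _ (Nat.le_succ n)
    · refine isAlg_of_mem ?_
      have := (mem_PF_self (Fin.snoc α a) (k := n + 1) (Fin.last n) (by simp)).1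
      rwa [Fin.snoc_last] at this
    · refine isAlg_of_mem ?_
      have := (mem_PF_self (Fin.snoc α a) (k := n + 1) (Fin.last n) (by simp)).2
      rwa [Fin.snoc_last] at this

lemma TowerN_restrict {n : ℕ} {β : Fin (n + 1) → ℂ} (hβ : TowerN (n + 1) β) :
    TowerN n (β ∘ Fin.castSucc) := by
  refine ⟨hβ.1.comp _ (Fin.castSucc_injective n), fun i => ?_⟩
  have := hβ.2 i.castSucc
  rw [show ((i.castSucc : Fin (n + 1)) : ℕ) = (i : ℕ) from rfl,
    PF_castSucc β (le_of_lt i.isLt)] at this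
  exact this

/-- merge two towers -/
lemma absorb {m : ℕ} {α : Fin m → ℂ} (hα : TowerN m α) :
    ∀ {n : ℕ} {β : Fin n → ℂ}, TowerN n β →
    ∃ (p : ℕ) (γ : Fin p → ℂ), TowerN p γ ∧ SF α ≤ SF γ ∧
      ∀ i : Fin n, IsAlgebraic ↥(SF γ) (β i) ∧ IsAlgebraic ↥(SF γ) (Complex.exp (β i)) := by
  intro n
  induction n with
  | zero => exact fun _ => ⟨m, α, hα, le_rfl, fun i => i.elim0⟩
  | succ n IH =>
    intro β hβ
    obtain ⟨p, γ, hγ, hle, hall⟩ := IH (TowerN_restrict hβ)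
    have hlast : IsAlgebraic ↥(SF γ) (β (Fin.last n)) ∨
        IsAlgebraic ↥(SF γ) (Complex.exp (β (Fin.last n))) := by
      rcases hβ.2 (Fin.last n) with h | h
      · left
        refine liftAlg (k := n) (β := β ∘ Fin.castSucc) (fun i hi => hall i) ?_
        rwa [← PF_castSucc β le_rfl]
      · right
        refine liftAlg (k := n) (β := β ∘ Fin.castSucc) (fun i hi => hall i) ?_
        rwa [← PF_castSucc β le_rfl]
    obtain ⟨q, δ, hδ, hle2, ha1, ha2⟩ := mergeOne hγ (β (Fin.last n)) hlast
    refine ⟨q, δ, hδ, le_trans hle hle2, fun i => ?_⟩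
    induction i using Fin.lastCases with
    | last => exact ⟨ha1, ha2⟩
    | cast i => exact ⟨isAlg_mono hle2 (hall i).1, isAlg_mono hle2 (hall i).2⟩

def Ucarrier : Set ℂ := {z | ∃ (n : ℕ) (α : Fin n → ℂ), TowerN n α ∧ IsAlgebraic ↥(SF α) z}

lemma towerEmpty : TowerN 0 Fin.elim0 :=
  ⟨linearIndependent_empty_type, fun i => i.elim0⟩

lemma Ucarrier_pair {z₁ z₂ : ℂ} (h1 : z₁ ∈ Ucarrier) (h2 : z₂ ∈ Ucarrier) :
    ∃ (p : ℕ) (γ : Fin p → ℂ), TowerN p γ ∧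
      IsAlgebraic ↥(SF γ) z₁ ∧ IsAlgebraic ↥(SF γ) z₂ := by
  obtain ⟨m, α, hα, hz1⟩ := h1
  obtain ⟨n, β, hβ, hz2⟩ := h2
  obtain ⟨p, γ, hγ, hle, hall⟩ := absorb hα hβ
  exact ⟨p, γ, hγ, isAlg_mono hle hz1, liftAlg (fun i _ => hall i) hz2⟩

lemma isAlg_op {K : Subfield ℂ} {z₁ z₂ w : ℂ} (h1 : IsAlgebraic ↥K z₁)
    (h2 : IsAlgebraic ↥K z₂) (hw : w ∈ Subfield.closure ((K : Set ℂ) ∪ {z₁, z₂})) :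
    IsAlgebraic ↥K w := by
  refine isAlg_combo (S := {z₁, z₂}) ?_ hw
  rintro x (rfl | rfl)
  · exact h1
  · exact h2

lemma sub_clos {K : Subfield ℂ} {S : Set ℂ} {z : ℂ} (h : z ∈ S) :
    z ∈ Subfield.closure ((K : Set ℂ) ∪ S) := Subfield.subset_closure (Or.inr h)

def U : Subfield ℂ where
  carrier := Ucarrier
  one_mem' := ⟨0, Fin.elim0, towerEmpty, isAlg_of_mem (Subfield.one_mem _)⟩
  zero_mem' := ⟨0, Fin.elim0, towerEmpty, isAlg_of_mem (Subfield.zero_mem _)⟩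
  mul_mem' := by
    rintro a b ha hb
    obtain ⟨p, γ, hγ, h1, h2⟩ := Ucarrier_pair ha hb
    exact ⟨p, γ, hγ, isAlg_op h1 h2
      (Subfield.mul_mem _ (sub_clos (by simp)) (sub_clos (by simp)))⟩
  add_mem' := by
    rintro a b ha hb
    obtain ⟨p, γ, hγ, h1, h2⟩ := Ucarrier_pair ha hb
    exact ⟨p, γ, hγ, isAlg_op h1 h2
      (Subfield.add_mem _ (sub_clos (by simp)) (sub_clos (by simp)))⟩
  neg_mem' := by
    rintro a ⟨n, α, hα, hz⟩
    exact ⟨n, α, hα, isAlg_op hz hz (Subfield.neg_mem _ (sub_clos (by simp)))⟩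
  inv_mem' := by
    rintro a ⟨n, α, hα, hz⟩
    exact ⟨n, α, hα, isAlg_op hz hz (Subfield.inv_mem _ (sub_clos (by simp)))⟩

lemma ELClosed_U : ELClosed U := by
  constructor
  · rintro x ⟨n, α, hα, hz⟩
    obtain ⟨p, γ, hγ, hle, -, hexp⟩ := mergeOne hα x (Or.inl hz)
    exact ⟨p, γ, hγ, hexp⟩
  · rintro x ⟨n, α, hα, hz⟩ hx0
    obtain ⟨p, γ, hγ, hle, hlog, -⟩ := mergeOne hα (Complex.log x) (Or.inr (by
      rwa [Complex.exp_log hx0]))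
    exact ⟨p, γ, hγ, hlog⟩

lemma EL_le_U : EL ≤ U := sInf_le ELClosed_U

lemma U_carrier (z : ℂ) : z ∈ U ↔ z ∈ Ucarrier := Iff.rfl

/-- The key induction step, shared by TDA and TDB. -/
lemma TD_step {n : ℕ} {α : Fin n → ℂ} {k : ℕ} (hk : k < n) (t : Finset ℂ)
    (habs : ∀ z : ℂ, IsAlgebraic ↥(PF α k) z → IsAlgebraic ↥(Subfield.closure (t : Set ℂ)) z)
    (t' : Finset ℂ) (hible : (t : Set ℂ) ⊆ (t' : Set ℂ))
    (hnew : IsAlgebraic ↥(Subfield.closure (t' : Set ℂ)) (α ⟨k, hk⟩) ∧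
      IsAlgebraic ↥(Subfield.closure (t' : Set ℂ)) (Complex.exp (α ⟨k, hk⟩))) :
    ∀ z : ℂ, IsAlgebraic ↥(PF α (k + 1)) z →
      IsAlgebraic ↥(Subfield.closure (t' : Set ℂ)) z := by
  intro z hz
  set G : Subfield ℂ := Subfield.closure (t' : Set ℂ) with hG
  set S : Set ℂ := (α '' {i | (i : ℕ) < k + 1}) ∪
    ((fun i => Complex.exp (α i)) '' {i | (i : ℕ) < k + 1}) with hS_def
  have hmono : ∀ w : ℂ, IsAlgebraic ↥(Subfield.closure (t : Set ℂ)) w → IsAlgebraic ↥G w :=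
    fun w hw => isAlg_mono (Subfield.closure_mono hible) hw
  refine isAlg_trans (S := S) ?_ (isAlg_mono (Subfield.closure_mono Set.subset_union_right) hz)
  rintro x (⟨i, hi, rfl⟩ | ⟨i, hi, rfl⟩) <;> rcases Nat.lt_succ_iff_lt_or_eq.1 hi with h | h
  · exact hmono _ (habs _ (isAlg_of_mem (mem_PF_self α i h).1))
  · have : i = ⟨k, hk⟩ := Fin.ext h
    rw [this]; exact hnew.1
  · exact hmono _ (habs _ (isAlg_of_mem (mem_PF_self α i h).2))
  · have : i = ⟨k, hk⟩ := Fin.ext h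
    rw [this]; exact hnew.2

lemma TDA {n : ℕ} {α : Fin n → ℂ} (hT : TowerN n α) :
    ∀ k, k ≤ n → ∃ t : Finset ℂ, t.card ≤ k ∧
      ∀ z : ℂ, IsAlgebraic ↥(PF α k) z → IsAlgebraic ↥(Subfield.closure (t : Set ℂ)) z := by
  intro k
  induction k with
  | zero =>
    intro _
    refine ⟨∅, le_rfl, fun z hz => ?_⟩
    refine isAlg_mono (Subfield.closure_le.2 ?_) hz
    intro x hx
    simp only [Set.mem_union, Set.mem_image, Set.mem_setOf_eq] at hx
    rcases hx with ⟨i, hi, -⟩ | ⟨i, hi, -⟩ <;> omega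
  | succ k IH =>
    intro hk1
    have hk : k < n := hk1
    obtain ⟨t, htc, habs⟩ := IH (le_of_lt hk)
    classical
    rcases hT.2 ⟨k, hk⟩ with hcase | hcase
    · refine ⟨insert (Complex.exp (α ⟨k, hk⟩)) t, ?_, ?_⟩
      · calc _ ≤ t.card + 1 := Finset.card_insert_le _ _
          _ ≤ k + 1 := by omega
      · refine TD_step hk t habs _ (by simp) ⟨?_, ?_⟩
        · refine isAlg_mono (Subfield.closure_mono (by simp)) ((habs _ hcase))
        · exact isAlg_of_mem (Subfield.subset_closure (by simp))
    · refine ⟨insert (α ⟨k, hk⟩) t, ?_, ?_⟩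
      · calc _ ≤ t.card + 1 := Finset.card_insert_le _ _
          _ ≤ k + 1 := by omega
      · refine TD_step hk t habs _ (by simp) ⟨?_, ?_⟩
        · exact isAlg_of_mem (Subfield.subset_closure (by simp))
        · refine isAlg_mono (Subfield.closure_mono (by simp)) ((habs _ hcase))

lemma TDB {n : ℕ} {α : Fin n → ℂ} (hT : TowerN n α) (j : Fin n)
    (hj2 : IsAlgebraic ↥(PF α j) (α j) ∧ IsAlgebraic ↥(PF α j) (Complex.exp (α j))) :
    ∀ k, (j : ℕ) < k → k ≤ n → ∃ t : Finset ℂ, t.card + 1 ≤ k ∧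
      ∀ z : ℂ, IsAlgebraic ↥(PF α k) z → IsAlgebraic ↥(Subfield.closure (t : Set ℂ)) z := by
  intro k
  induction k with
  | zero => omega
  | succ k IH =>
    intro hjk hk1
    have hk : k < n := hk1
    classical
    rcases Nat.lt_succ_iff_lt_or_eq.1 hjk with hjk' | hjk'
    · obtain ⟨t, htc, habs⟩ := IH hjk' (le_of_lt hk)
      rcases hT.2 ⟨k, hk⟩ with hcase | hcase
      · refine ⟨insert (Complex.exp (α ⟨k, hk⟩)) t, ?_, ?_⟩
        · calc _ ≤ t.card + 1 + 1 := by
                have := Finset.card_insert_le (Complex.exp (α ⟨k, hk⟩)) t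
                omega
            _ ≤ k + 1 := by omega
        · refine TD_step hk t habs _ (by simp) ⟨?_, ?_⟩
          · refine isAlg_mono (Subfield.closure_mono (by simp)) ((habs _ hcase))
          · exact isAlg_of_mem (Subfield.subset_closure (by simp))
      · refine ⟨insert (α ⟨k, hk⟩) t, ?_, ?_⟩
        · calc _ ≤ t.card + 1 + 1 := by
                have := Finset.card_insert_le (α ⟨k, hk⟩) t
                omega
            _ ≤ k + 1 := by omega
        · refine TD_step hk t habs _ (by simp) ⟨?_, ?_⟩
          · exact isAlg_of_mem (Subfield.subset_closure (by simp))
          · refine isAlg_mono (Subfield.closure_mono (by simp)) ((habs _ hcase))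
    · -- k = j : both entries are algebraic over PF α k, add nothing
      obtain ⟨t, htc, habs⟩ := TDA hT k (le_of_lt hk)
      have hjeq : j = ⟨k, hk⟩ := Fin.ext (by simpa using hjk')
      refine ⟨t, by omega, ?_⟩
      refine TD_step hk t habs t (by simp) ⟨?_, ?_⟩
      · refine habs _ ?_
        have := hj2.1
        rwa [hjeq] at this
      · refine habs _ ?_
        have := hj2.2
        rwa [hjeq] at this
  
lemma bot_union (X : Set ℂ) :
    Subfield.closure (((⊥ : Subfield ℂ) : Set ℂ) ∪ X) = Subfield.closure X := by
  refine le_antisymm (Subfield.closure_le.2 ?_) (Subfield.closure_mono Set.subset_union_right)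
  rintro x (hx | hx)
  · exact (bot_le : (⊥ : Subfield ℂ) ≤ Subfield.closure X) hx
  · exact Subfield.subset_closure hx


/-- Assuming Schanuel's conjecture, the real root of `x + eˣ = 0` is not an EL number. -/
theorem root_not_mem_EL (hS : SchanuelConjecture) (R : ℝ)
    (hR : R + Real.exp R = 0) : (R : ℂ) ∉ EL := by
  intro hmem
  set z : ℂ := (R : ℂ) with hz_def
  have hz_exp : Complex.exp z = -z := by
    have h0 : z + Complex.exp z = 0 := by
      have := congrArg (fun x : ℝ => (x : ℂ)) hR
      push_cast at this
      rw [← Complex.ofReal_exp] at this ⊢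
      push_cast
      simpa using this
    linear_combination h0
  have hz0 : z ≠ 0 := by
    intro h
    rw [h, neg_zero, Complex.exp_zero] at hz_exp
    exact one_ne_zero hz_exp
  obtain ⟨n, α, hT, hzalg⟩ := (U_carrier z).1 (EL_le_U hmem)
  by_cases hspan : z ∈ Submodule.span ℚ (Set.range α)
  · -- CASE B : z is in the ℚ-span of the tower entries
    obtain ⟨N, c, m, hNpos, hsum, hmc, hm0⟩ := span_int_relation hspan
    classical
    have hcne : ∃ i, c i ≠ 0 := by
      by_contra hall
      push_neg at hall
      apply hz0
      rw [hsum]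
      simp [hall]
    have hsne : (Finset.univ.filter (fun i => c i ≠ 0)).Nonempty := by
      obtain ⟨i, hi⟩ := hcne
      exact ⟨i, by simp [hi]⟩
    obtain ⟨j, hcj, hmax⟩ : ∃ j : Fin n, c j ≠ 0 ∧ ∀ i, c i ≠ 0 → i ≤ j := by
      refine ⟨(Finset.univ.filter (fun i => c i ≠ 0)).max' hsne, ?_, ?_⟩
      · have := (Finset.univ.filter (fun i => c i ≠ 0)).max'_mem hsne
        exact (Finset.mem_filter.1 this).2
      · intro i hi
        exact Finset.le_max' _ i (by simp [hi])
    have hmj : m j ≠ 0 := fun h => hcj ((hm0 j).1 h)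
    -- the prefix field at j
    set A : Subfield ℂ := PF α (j : ℕ) with hA_def
    -- the rest of the sum lies in A
    have hrest : (∑ i ∈ Finset.univ.erase j, (c i : ℂ) * α i) ∈ A := by
      refine Subfield.sum_mem _ fun i hi => ?_
      rcases eq_or_ne (c i) 0 with h | h
      · rw [show ((c i : ℂ)) = 0 by exact_mod_cast h, zero_mul]
        exact A.zero_mem
      · have hij : i < j := lt_of_le_of_ne (hmax i h) (Finset.mem_erase.1 hi).1
        exact Subfield.mul_mem _ (SubfieldClass.ratCast_mem A (c i))
          (mem_PF_self α i hij).1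
    have hzsplit : z = (c j : ℂ) * α j + ∑ i ∈ Finset.univ.erase j, (c i : ℂ) * α i := by
      rw [hsum, ← Finset.add_sum_erase _ _ (Finset.mem_univ j)]
      simp [Rat.smul_def]
    -- the product over i ≠ j lies in A
    have hP0 : (∏ i ∈ Finset.univ.erase j, Complex.exp (α i) ^ m i) ∈ A := by
      refine Subfield.prod_mem _ fun i hi => ?_
      rcases eq_or_ne (m i) 0 with h | h
      · rw [h, zpow_zero]
        exact A.one_mem
      · have hij : i < j := lt_of_le_of_ne (hmax i fun hc0 => h ((hm0 i).2 hc0))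
          (Finset.mem_erase.1 hi).1
        exact Subfield.zpow_mem _ (mem_PF_self α i hij).2 _
    -- main multiplicative relation
    have hrel : (-z) ^ N = Complex.exp (α j) ^ m j *
        ∏ i ∈ Finset.univ.erase j, Complex.exp (α i) ^ m i := by
      rw [← hz_exp, exp_pow_relation α z c N m hsum hmc,
        ← Finset.mul_prod_erase _ _ (Finset.mem_univ j)]
    have hP0ne : (∏ i ∈ Finset.univ.erase j, Complex.exp (α i) ^ m i) ≠ 0 :=
      Finset.prod_ne_zero_iff.2 fun i _ => zpow_ne_zero _ (Complex.exp_ne_zero _)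
    -- in both tower cases, both α j and exp (α j) are algebraic over A
    have hboth : IsAlgebraic ↥A (α j) ∧ IsAlgebraic ↥A (Complex.exp (α j)) := by
      rcases hT.2 j with hcase | hcase
      · -- α j algebraic over A
        refine ⟨hcase, ?_⟩
        have hzalgA : IsAlgebraic ↥A z := by
          refine isAlg_combo (S := ({α j} : Set ℂ)) (by rintro x rfl; exact hcase) ?_
          rw [hzsplit]
          refine Subfield.add_mem _ ?_ (Subfield.subset_closure (Or.inl hrest))
          exact Subfield.mul_mem _
            (Subfield.subset_closure (Or.inl (SubfieldClass.ratCast_mem A (c j))))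
            (Subfield.subset_closure (Or.inr rfl))
        have hpowalg : IsAlgebraic ↥A ((-z) ^ N) := by
          refine isAlg_combo (S := ({z} : Set ℂ)) (by rintro x rfl; exact hzalgA) ?_
          have hzmem : z ∈ Subfield.closure ((A : Set ℂ) ∪ ({z} : Set ℂ)) :=
            Subfield.subset_closure (Or.inr rfl)
          exact pow_mem (Subfield.neg_mem _ hzmem) N
        have hEk : IsAlgebraic ↥A (Complex.exp (α j) ^ m j) := by
          refine isAlg_combo (S := ({(-z) ^ N} : Set ℂ)) (by rintro x rfl; exact hpowalg) ?_
          have : Complex.exp (α j) ^ m j = (-z) ^ N *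
              (∏ i ∈ Finset.univ.erase j, Complex.exp (α i) ^ m i)⁻¹ := by
            rw [hrel]
            field_simp
          rw [this]
          exact Subfield.mul_mem _ (Subfield.subset_closure (Or.inr rfl))
            (Subfield.inv_mem _ (Subfield.subset_closure (Or.inl hP0)))
        exact isAlg_of_zpow hmj hEk
      · -- exp (α j) algebraic over A
        have hEk : IsAlgebraic ↥A (Complex.exp (α j) ^ m j) := isAlg_zpow hcase (m j)
        have hpowalg : IsAlgebraic ↥A ((-z) ^ N) := by
          refine isAlg_combo (S := ({Complex.exp (α j) ^ m j} : Set ℂ))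
            (by rintro x rfl; exact hEk) ?_
          rw [hrel]
          exact Subfield.mul_mem _ (Subfield.subset_closure (Or.inr rfl))
            (Subfield.subset_closure (Or.inl hP0))
        have hnegz : IsAlgebraic ↥A (-z) := hpowalg.of_pow hNpos
        have hzalgA : IsAlgebraic ↥A z := by
          refine isAlg_combo (S := ({-z} : Set ℂ)) (by rintro x rfl; exact hnegz) ?_
          have hmem2 : -(-z) ∈ Subfield.closure ((A : Set ℂ) ∪ {-z}) :=
            Subfield.neg_mem _ (Subfield.subset_closure (Or.inr rfl))
          simpa using hmem2
        refine ⟨?_, hcase⟩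
        refine isAlg_combo (S := ({z} : Set ℂ)) (by rintro x rfl; exact hzalgA) ?_
        have : α j = (z - ∑ i ∈ Finset.univ.erase j, (c i : ℂ) * α i) * (c j : ℂ)⁻¹ := by
          rw [hzsplit]
          have : ((c j : ℂ)) ≠ 0 := by exact_mod_cast hcj
          field_simp
          ring
        rw [this]
        refine Subfield.mul_mem _ (Subfield.sub_mem _ (Subfield.subset_closure (Or.inr rfl))
          (Subfield.subset_closure (Or.inl hrest))) ?_
        exact Subfield.inv_mem _
          (Subfield.subset_closure (Or.inl (SubfieldClass.ratCast_mem A (c j))))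
    -- n must be positive
    rcases n with - | n'
    · exact j.elim0
    obtain ⟨t, htc, habs⟩ := TDB hT j hboth (n' + 1) j.isLt le_rfl
    obtain ⟨f, hfmem, hfind⟩ := hS (n' + 1) α hT.1
    have hgens : (Set.range α ∪ Set.range fun i => Complex.exp (α i)) ⊆ ↑(SF α) := by
      rintro x (⟨i, rfl⟩ | ⟨i, rfl⟩)
      · exact (mem_PF_self α i i.isLt).1
      · exact (mem_PF_self α i i.isLt).2
    have hfalg : ∀ i, IsAlgebraic ↥(SF α) (f i) := fun i =>
      isAlg_of_mem (Subfield.closure_le.2 hgens (hfmem i))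
    refine lemA n' ⊥ t (by omega) f ?_ ?_
    · intro i
      rw [bot_union]
      exact entry_transcendental hfind i
    · intro i
      rw [bot_union]
      exact habs _ (hfalg i)
  · -- CASE A : z is not in the ℚ-span
    have hli : LinearIndependent ℚ (Fin.snoc α z : Fin (n + 1) → ℂ) :=
      linearIndependent_fin_snoc.2 ⟨hT.1, hspan⟩
    obtain ⟨f, hfmem, hfind⟩ := hS (n + 1) (Fin.snoc α z) hli
    have hgens : ∀ x ∈ (Set.range (Fin.snoc α z : Fin (n + 1) → ℂ) ∪
        Set.range fun i => Complex.exp ((Fin.snoc α z : Fin (n + 1) → ℂ) i)),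
        IsAlgebraic ↥(SF α) x := by
      rintro x (⟨i, rfl⟩ | ⟨i, rfl⟩)
      · induction i using Fin.lastCases with
        | last =>
          rw [Fin.snoc_last]
          exact hzalg
        | cast i =>
          rw [Fin.snoc_castSucc]
          exact isAlg_of_mem (mem_PF_self α i i.isLt).1
      · induction i using Fin.lastCases with
        | last =>
          simp only [Fin.snoc_last, hz_exp]
          refine isAlg_combo (S := ({z} : Set ℂ)) (by rintro x rfl; exact hzalg) ?_
          exact Subfield.neg_mem _ (Subfield.subset_closure (Or.inr rfl))
        | cast i =>
          simp only [Fin.snoc_castSucc]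
          exact isAlg_of_mem (mem_PF_self α i i.isLt).2
    have hfalg : ∀ i, IsAlgebraic ↥(SF α) (f i) := by
      intro i
      refine isAlg_combo hgens ?_
      exact Subfield.closure_mono Set.subset_union_right (hfmem i)
    obtain ⟨t, htc, habs⟩ := TDA hT n le_rfl
    refine lemA n ⊥ t htc f ?_ ?_
    · intro i
      rw [bot_union]
      exact entry_transcendental hfind i
    · intro i
      rw [bot_union]
      exact habs _ (hfalg i)

end AuxiliaryLemmas
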